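/- The coalition number of the Petersen graph equals 6. -/
import Mathlib

open Finset

/-- `S` is a dominating set of `G`: every vertex outside `S` has a neighbor in `S`. -/
def Dominates {V : Type*} (G : SimpleGraph V) (S : Finset V) : Prop :=
  ∀ v ∉ S, ∃ u ∈ S, G.Adj u v

/-- Two disjoint non-dominating sets whose union dominates form a coalition. -/
def FormsCoalition {V : Type*} [DecidableEq V] (G : SimpleGraph V) (X Y : Finset V) : Prop :=
  ¬ Dominates G X ∧ ¬ Dominates G Y ∧ Dominates G (X ∪ Y)

/-- A coalition partition: every class is a singleton dominating set, or is a
non-dominating set forming a coalition with another class. -/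
def IsCoalitionPartition {V : Type*} [Fintype V] [DecidableEq V] (G : SimpleGraph V)
    (π : Finpartition (univ : Finset V)) : Prop :=
  ∀ X ∈ π.parts, (X.card = 1 ∧ Dominates G X) ∨
    (¬ Dominates G X ∧ ∃ Y ∈ π.parts, Y ≠ X ∧ ¬ Dominates G Y ∧ Dominates G (X ∪ Y))

/-- The coalition number: the maximum order of a coalition partition. -/
noncomputable def coalitionNumber (V : Type*) [Fintype V] [DecidableEq V]
    (G : SimpleGraph V) : ℕ :=
  sSup {k | ∃ π : Finpartition (univ : Finset V), IsCoalitionPartition G π ∧ π.parts.card = k}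

def petersenK : SimpleGraph {s : Finset (Fin 5) // s.card = 2} :=
  SimpleGraph.fromRel (fun a b => Disjoint a.1 b.1)

/-! ### Auxiliary setup -/

abbrev PV := {s : Finset (Fin 5) // s.card = 2}

instance : DecidableRel petersenK.Adj :=
  fun a b => decidable_of_iff _ (SimpleGraph.fromRel_adj _ a b).symm

instance : DecidablePred (Dominates petersenK) := fun S => by
  unfold Dominates; infer_instance

/-- Closed neighborhood of `u` as a finset. -/
def Nfin (u : PV) : Finset PV := univ.filter (fun v => v = u ∨ petersenK.Adj v u)

/-- The set of potential coalition partners of `Y` among single vertices. -/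
def pSet (Y : Finset PV) : Finset PV := univ.filter (fun v => Dominates petersenK (insert v Y))

set_option maxRecDepth 10000

lemma fact1 : ∀ a b : PV, ¬ Dominates petersenK {a, b} := by decide

lemma factDeg : ∀ u : PV, (Nfin u).card = 4 := by decide

set_option maxRecDepth 1000000 in
set_option maxHeartbeats 10000000 in
lemma fact2 : ∀ b1 b2 : PV, (pSet {b1, b2}).card ≤ 1 := by decide

set_option maxRecDepth 1000000 in
set_option maxHeartbeats 10000000 in
lemma fact5 : ∀ v b1 b2 : PV, Dominates petersenK (insert v ({b1, b2} : Finset PV)) →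
    ∀ u : PV, (insert v ({b1, b2} : Finset PV)) ∩ Nfin u = ∅ →
    ¬ Dominates petersenK (insert u (univ \ (Nfin u ∪ insert v ({b1, b2} : Finset PV)))) := by
  decide

lemma mem_pSet {v : PV} {Y : Finset PV} :
    v ∈ pSet Y ↔ Dominates petersenK (insert v Y) := by
  simp [pSet]

lemma mem_Nfin {v u : PV} : v ∈ Nfin u ↔ v = u ∨ petersenK.Adj v u := by
  simp [Nfin]

/-- If `Y` does not dominate, witnessed by missed vertex `u`, then any vertex that
completes `Y` to a dominating set lies in the closed neighborhood of `u`. -/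
lemma pSet_subset {Y : Finset PV} {u : PV} (hu : u ∉ Y)
    (hmiss : ∀ a ∈ Y, ¬ petersenK.Adj a u) : pSet Y ⊆ Nfin u := by
  intro v hv
  rw [mem_pSet] at hv
  rw [mem_Nfin]
  by_cases hvu : v = u
  · exact Or.inl hvu
  · have hunotin : u ∉ insert v Y := by
      simp only [mem_insert]
      rintro (h | h)
      · exact hvu h.symm
      · exact hu h
    obtain ⟨w, hw, hadj⟩ := hv u hunotin
    rcases mem_insert.mp hw with rfl | hwY
    · exact Or.inr hadj
    · exact absurd hadj (hmiss w hwY)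

/-- Extract a missed vertex from a non-dominating set. -/
lemma exists_missed {Y : Finset PV} (h : ¬ Dominates petersenK Y) :
    ∃ u, u ∉ Y ∧ ∀ a ∈ Y, ¬ petersenK.Adj a u := by
  unfold Dominates at h
  push_neg at h
  obtain ⟨u, hu1, hu2⟩ := h
  exact ⟨u, hu1, hu2⟩

lemma pSet_card_le_four {Y : Finset PV} (h : ¬ Dominates petersenK Y) :
    (pSet Y).card ≤ 4 := by
  obtain ⟨u, hu, hmiss⟩ := exists_missed h
  calc (pSet Y).card ≤ (Nfin u).card := card_le_card (pSet_subset hu hmiss)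
    _ = 4 := factDeg u

/-! ### Upper bound -/

lemma upper_bound (π : Finpartition (univ : Finset PV))
    (hc : IsCoalitionPartition petersenK π) : π.parts.card ≤ 6 := by
  by_contra hk
  push_neg at hk
  set P := π.parts with hP
  -- every part is nonempty
  have hpos : ∀ Y ∈ P, 1 ≤ Y.card := fun Y hY =>
    Finset.card_pos.mpr (π.nonempty_of_mem_parts hY)
  -- non-singleton parts do not dominate
  have hnd : ∀ Y ∈ P, Y.card ≠ 1 → ¬ Dominates petersenK Y := by
    intro Y hY hY1
    rcases hc Y hY with ⟨h1, _⟩ | ⟨h, _⟩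
    · exact absurd h1 hY1
    · exact h
  have hdisj : (P : Set (Finset PV)).PairwiseDisjoint id := π.supIndep.pairwiseDisjoint
  classical
  set S := P.filter (fun Y => Y.card = 1) with hS
  set Bb := P.filter (fun Y => ¬ Y.card = 1) with hBb
  -- each singleton part has a partner in Bb
  have hpart : ∀ Y ∈ S, ∃ v, Y = {v} ∧ ∃ Z ∈ Bb, v ∈ pSet Z := by
    intro Y hYS
    obtain ⟨hYP, hY1⟩ := mem_filter.mp hYS
    obtain ⟨v, rfl⟩ := card_eq_one.mp hY1
    refine ⟨v, rfl, ?_⟩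
    rcases hc {v} hYP with ⟨_, hdom⟩ | ⟨_, Z, hZP, hZne, hZnd, hZdom⟩
    · exact absurd (by simpa using hdom) (fact1 v v)
    · by_cases hZ1 : Z.card = 1
      · obtain ⟨w, rfl⟩ := card_eq_one.mp hZ1
        have : Dominates petersenK {v, w} := by
          simpa [Finset.union_comm] using hZdom
        exact absurd this (fact1 v w)
      · refine ⟨Z, mem_filter.mpr ⟨hZP, hZ1⟩, ?_⟩
        rw [mem_pSet]
        simpa [← Finset.insert_eq] using hZdom
  -- the set of vertices lying in singleton parts
  set SV := S.biUnion id with hSV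
  have hsum_singles : ∑ Y ∈ S, Y.card = S.card := by
    calc ∑ Y ∈ S, Y.card = ∑ _Y ∈ S, 1 :=
          Finset.sum_congr rfl (fun Y hY => (mem_filter.mp hY).2)
      _ = S.card := by simp
  have hSVcard : SV.card = S.card := by
    rw [hSV, card_biUnion
      (fun x hx y hy hxy => hdisj (mem_filter.mp hx).1 (mem_filter.mp hy).1 hxy)]
    simp only [id_eq]
    exact hsum_singles
  have hSVsub : SV ⊆ Bb.biUnion pSet := by
    intro v hv
    obtain ⟨Y, hY, hvY⟩ := mem_biUnion.mp hv
    obtain ⟨w, rfl, Z, hZ, hw⟩ := hpart Y hY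
    rcases mem_singleton.mp hvY
    exact mem_biUnion.mpr ⟨Z, hZ, hw⟩
  set B2 := Bb.filter (fun Y => Y.card = 2) with hB2
  set B3 := Bb.filter (fun Y => ¬ Y.card = 2) with hB3
  have hcap2 : ∀ Y ∈ B2, (pSet Y).card ≤ 1 := by
    intro Y hY
    obtain ⟨b1, b2, _, rfl⟩ := card_eq_two.mp (mem_filter.mp hY).2
    exact fact2 b1 b2
  have hcap3 : ∀ Y ∈ B3, (pSet Y).card ≤ 4 := by
    intro Y hY
    have hYBb := (mem_filter.mp hY).1
    exact pSet_card_le_four (hnd Y (mem_filter.mp hYBb).1 (mem_filter.mp hYBb).2)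
  -- main counting inequality
  have hcount1 : S.card ≤ B2.card * 1 + B3.card * 4 := by
    calc S.card = SV.card := hSVcard.symm
      _ ≤ (Bb.biUnion pSet).card := card_le_card hSVsub
      _ ≤ ∑ Y ∈ Bb, (pSet Y).card := card_biUnion_le
      _ = ∑ Y ∈ B2, (pSet Y).card + ∑ Y ∈ B3, (pSet Y).card :=
          (Finset.sum_filter_add_sum_filter_not Bb _ _).symm
      _ ≤ B2.card * 1 + B3.card * 4 := by
          gcongr ?_ + ?_
          · simpa using Finset.sum_le_card_nsmul B2 _ 1 hcap2
          · simpa using Finset.sum_le_card_nsmul B3 _ 4 hcap3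
  -- size inequality
  have huniv : (univ : Finset PV).card = 10 := by decide
  have h10 : ∑ Y ∈ P, Y.card = 10 := by rw [π.sum_card_parts, huniv]
  have hsplit : ∑ Y ∈ S, Y.card + ∑ Y ∈ Bb, Y.card = 10 := by
    rw [← h10, hS, hBb]; exact Finset.sum_filter_add_sum_filter_not P _ _
  have hsplit2 : ∑ Y ∈ B2, Y.card + ∑ Y ∈ B3, Y.card = ∑ Y ∈ Bb, Y.card :=
    Finset.sum_filter_add_sum_filter_not Bb _ _
  have hge2 : B2.card * 2 ≤ ∑ Y ∈ B2, Y.card := by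
    simpa using Finset.card_nsmul_le_sum B2 _ 2 (fun Y hY => le_of_eq (mem_filter.mp hY).2.symm)
  have hge3 : B3.card * 3 ≤ ∑ Y ∈ B3, Y.card := by
    refine le_trans (le_of_eq ?_) (Finset.card_nsmul_le_sum B3 _ 3 ?_)
    · simp [mul_comm]
    · intro Y hY
      have h1 : 1 ≤ Y.card := hpos Y (mem_filter.mp (mem_filter.mp hY).1).1
      have hne1 : Y.card ≠ 1 := (mem_filter.mp (mem_filter.mp hY).1).2
      have hne2 : Y.card ≠ 2 := (mem_filter.mp hY).2
      omega
  have hcards1 : S.card + Bb.card = P.card := by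
    rw [hS, hBb]; exact Finset.card_filter_add_card_filter_not _
  have hcards2 : B2.card + B3.card = Bb.card := by
    rw [hB2, hB3]; exact Finset.card_filter_add_card_filter_not _
  have hS5 : S.card = 5 ∧ B2.card = 1 ∧ B3.card = 1 := by
    have := hsum_singles
    omega
  -- extract the two big parts
  obtain ⟨hs5, hb2, hb3⟩ := hS5
  obtain ⟨Bp, hBpeq'⟩ := card_eq_one.mp hb2
  obtain ⟨A, hAeq'⟩ := card_eq_one.mp hb3
  have hBpB2 : Bp ∈ B2 := hBpeq' ▸ mem_singleton_self Bp
  have hAB3 : A ∈ B3 := hAeq' ▸ mem_singleton_self A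
  have hBpBb : Bp ∈ Bb := (mem_filter.mp hBpB2).1
  have hABb : A ∈ Bb := (mem_filter.mp hAB3).1
  have hBpP : Bp ∈ P := (mem_filter.mp hBpBb).1
  have hAP : A ∈ P := (mem_filter.mp hABb).1
  have hBpcard : Bp.card = 2 := (mem_filter.mp hBpB2).2
  have hAcard1 : A.card ≠ 1 := (mem_filter.mp hABb).2
  have hAcard2 : A.card ≠ 2 := (mem_filter.mp hAB3).2
  have hBbeq : Bb = {Bp, A} := by
    have := Finset.filter_union_filter_not_eq (fun Y => Y.card = 2) Bb
    rw [← hB2, ← hB3, hBpeq', hAeq'] at this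
    rw [← this]; rfl
  have hSVsub2 : SV ⊆ pSet Bp ∪ pSet A := by
    intro v hv
    have := hSVsub hv
    rw [hBbeq] at this
    simpa using mem_biUnion.mp this
  obtain ⟨b1, b2, hbne, hBppair⟩ := card_eq_two.mp hBpcard
  have hpBp1 : (pSet Bp).card ≤ 1 := by rw [hBppair]; exact fact2 b1 b2
  have hndA : ¬ Dominates petersenK A := hnd A hAP hAcard1
  obtain ⟨u, hu, hmiss⟩ := exists_missed hndA
  have hsubN : pSet A ⊆ Nfin u := pSet_subset hu hmiss
  have hpA4 : 4 ≤ (pSet A).card := by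
    have h1 : SV.card ≤ (pSet Bp ∪ pSet A).card := card_le_card hSVsub2
    have h2 : (pSet Bp ∪ pSet A).card ≤ (pSet Bp).card + (pSet A).card := card_union_le _ _
    omega
  have hpAeq : pSet A = Nfin u :=
    Finset.eq_of_subset_of_card_le hsubN (by rw [factDeg u]; exact hpA4)
  -- the singleton vertices consist of `Nfin u` and one extra vertex `v5`
  have hsdiffsub : SV \ pSet Bp ⊆ SV ∩ Nfin u := by
    intro x hx
    rw [mem_sdiff] at hx
    rcases mem_union.mp (hSVsub2 hx.1) with h | h
    · exact absurd h hx.2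
    · exact mem_inter.mpr ⟨hx.1, hpAeq ▸ h⟩
  have hinter4 : 4 ≤ (SV ∩ Nfin u).card := by
    have h1 : SV.card - (pSet Bp).card ≤ (SV \ pSet Bp).card := le_card_sdiff _ _
    have h2 := card_le_card hsdiffsub
    omega
  have hinterEq : SV ∩ Nfin u = Nfin u :=
    Finset.eq_of_subset_of_card_le inter_subset_right (by rw [factDeg u]; exact hinter4)
  have hNsubSV : Nfin u ⊆ SV := fun x hx => (mem_inter.mp (hinterEq.symm ▸ hx)).1
  have hsdiff1 : (SV \ Nfin u).card = 1 := by
    have h1 := Finset.card_inter_add_card_sdiff SV (Nfin u)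
    have h2 : (SV ∩ Nfin u).card = 4 := by rw [hinterEq]; exact factDeg u
    omega
  obtain ⟨v5, hv5eq⟩ := card_eq_one.mp hsdiff1
  have hv5SV : v5 ∈ SV := (mem_sdiff.mp (hv5eq ▸ mem_singleton_self v5)).1
  have hv5N : v5 ∉ Nfin u := (mem_sdiff.mp (hv5eq ▸ mem_singleton_self v5)).2
  have hv5Bp : v5 ∈ pSet Bp := by
    rcases mem_union.mp (hSVsub2 hv5SV) with h | h
    · exact h
    · exact absurd (hpAeq ▸ h) hv5N
  -- membership in singleton parts excludes the big parts
  have hSVnot : ∀ x ∈ SV, ∀ Z ∈ P, Z.card ≠ 1 → x ∉ Z := by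
    intro x hx Z hZ hZ1 hxZ
    obtain ⟨Y, hY, hxY⟩ := mem_biUnion.mp hx
    have hYP := (mem_filter.mp hY).1
    have hY1 := (mem_filter.mp hY).2
    have hne : Y ≠ Z := fun h => hZ1 (h ▸ hY1)
    exact (Finset.disjoint_left.mp (hdisj hYP hZ hne)) hxY hxZ
  have hSVsubN5 : SV ⊆ Nfin u ∪ {v5} := by
    intro x hx
    by_cases hxN : x ∈ Nfin u
    · exact mem_union_left _ hxN
    · have : x ∈ SV \ Nfin u := mem_sdiff.mpr ⟨hx, hxN⟩
      rw [hv5eq] at this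
      exact mem_union_right _ this
  -- identify A with the complement
  have hAcompl : univ \ (Nfin u ∪ insert v5 Bp) = A := by
    ext x
    simp only [mem_sdiff, mem_univ, true_and, mem_union, mem_insert, not_or]
    constructor
    · rintro ⟨hxN, hxv5, hxBp⟩
      obtain ⟨Y, hY, hxY⟩ := π.exists_mem (mem_univ x)
      by_cases hY1 : Y.card = 1
      · exfalso
        have hxSV : x ∈ SV := mem_biUnion.mpr ⟨Y, mem_filter.mpr ⟨hY, hY1⟩, hxY⟩
        rcases mem_union.mp (hSVsubN5 hxSV) with h | h
        · exact hxN h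
        · exact hxv5 (mem_singleton.mp h)
      · have hYBb : Y ∈ Bb := mem_filter.mpr ⟨hY, hY1⟩
        rw [hBbeq] at hYBb
        rcases mem_insert.mp hYBb with rfl | hYA
        · exact absurd hxY hxBp
        · rw [mem_singleton.mp hYA] at hxY
          exact hxY
    · intro hxA
      refine ⟨fun hxN => hSVnot x (hNsubSV hxN) A hAP hAcard1 hxA, ?_, ?_⟩
      · rintro rfl
        exact hSVnot x hv5SV A hAP hAcard1 hxA
      · intro hxBp
        have hne : A ≠ Bp := fun h => hAcard2 (h ▸ hBpcard)
        exact (Finset.disjoint_left.mp (hdisj hAP hBpP hne)) hxA hxBp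
  have hintEmpty : (insert v5 ({b1, b2} : Finset PV)) ∩ Nfin u = ∅ := by
    rw [← hBppair]
    rw [Finset.eq_empty_iff_forall_notMem]
    intro x hx
    obtain ⟨hx1, hx2⟩ := mem_inter.mp hx
    rcases mem_insert.mp hx1 with rfl | hxBp
    · exact hv5N hx2
    · exact hSVnot x (hNsubSV hx2) Bp hBpP (by omega) hxBp
  have hDomuA : Dominates petersenK (insert u A) := by
    have huN : u ∈ Nfin u := mem_Nfin.mpr (Or.inl rfl)
    rw [← hpAeq] at huN
    exact mem_pSet.mp huN
  have := fact5 v5 b1 b2 (by rw [← hBppair]; exact mem_pSet.mp hv5Bp) u hintEmpty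
  rw [← hBppair, hAcompl] at this
  exact this hDomuA

/-! ### Lower bound: an explicit coalition partition with 6 parts -/

def x01 : PV := ⟨{0, 1}, by decide⟩
def x02 : PV := ⟨{0, 2}, by decide⟩
def x03 : PV := ⟨{0, 3}, by decide⟩
def x04 : PV := ⟨{0, 4}, by decide⟩
def x12 : PV := ⟨{1, 2}, by decide⟩
def x13 : PV := ⟨{1, 3}, by decide⟩
def x14 : PV := ⟨{1, 4}, by decide⟩
def x23 : PV := ⟨{2, 3}, by decide⟩
def x24 : PV := ⟨{2, 4}, by decide⟩
def x34 : PV := ⟨{3, 4}, by decide⟩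

def exParts : Finset (Finset PV) :=
  { {x34, x24, x14}, {x13, x23, x03}, {x12}, {x04}, {x02}, {x01} }

lemma exParts_inter : ∀ x ∈ exParts, ∀ y ∈ exParts, x ≠ y → x ∩ y = ∅ := by
  intro x hx y hy
  fin_cases hx <;> fin_cases hy <;> decide

def exPartition : Finpartition (univ : Finset PV) where
  parts := exParts
  supIndep := by
    rw [Finset.supIndep_iff_pairwiseDisjoint]
    intro x hx y hy hne
    exact Finset.disjoint_iff_inter_eq_empty.mpr
      (exParts_inter x (mem_coe.mp hx) y (mem_coe.mp hy) hne)
  sup_parts := by decide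
  bot_notMem := by decide

lemma exPartition_coalition : IsCoalitionPartition petersenK exPartition := by
  have hP1 : ({x34, x24, x14} : Finset PV) ∈ exParts := mem_insert_self _ _
  have hP2 : ({x13, x23, x03} : Finset PV) ∈ exParts := mem_insert_of_mem (mem_insert_self _ _)
  intro X hX
  fin_cases hX
  · exact Or.inr ⟨by decide, ⟨{x13, x23, x03}, hP2, by decide, by decide, by decide⟩⟩
  · exact Or.inr ⟨by decide, ⟨{x34, x24, x14}, hP1, by decide, by decide, by decide⟩⟩
  · exact Or.inr ⟨by decide, ⟨{x34, x24, x14}, hP1, by decide, by decide, by decide⟩⟩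
  · exact Or.inr ⟨by decide, ⟨{x34, x24, x14}, hP1, by decide, by decide, by decide⟩⟩
  · exact Or.inr ⟨by decide, ⟨{x13, x23, x03}, hP2, by decide, by decide, by decide⟩⟩
  · exact Or.inr ⟨by decide, ⟨{x13, x23, x03}, hP2, by decide, by decide, by decide⟩⟩

lemma exPartition_card : exPartition.parts.card = 6 := by decide

/-! ### Main theorem -/

theorem stmt9 : coalitionNumber {s : Finset (Fin 5) // s.card = 2} petersenK = 6 := by
  have hmem : 6 ∈ {k | ∃ π : Finpartition (univ : Finset PV),
      IsCoalitionPartition petersenK π ∧ π.parts.card = k} :=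
    ⟨exPartition, exPartition_coalition, exPartition_card⟩
  have hub : ∀ k ∈ {k | ∃ π : Finpartition (univ : Finset PV),
      IsCoalitionPartition petersenK π ∧ π.parts.card = k}, k ≤ 6 := by
    rintro k ⟨π, hπ, rfl⟩
    exact upper_bound π hπ
  exact le_antisymm (csSup_le ⟨6, hmem⟩ hub) (le_csSup ⟨6, hub⟩ hmem)
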